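/- Let θ : F(a,b) → F(a,b) be the endomorphism of the free group on two generators determined by θ(a) = ab and θ(b) = ba. Then θ is injective. -/
import Mathlib


/-- The endomorphism `θ` of the free group `F(a,b)` (with `a = of true`, `b = of false`)
determined by `θ(a) = ab` and `θ(b) = ba`. -/
def θ : FreeGroup Bool →* FreeGroup Bool :=
  FreeGroup.lift fun x : Bool =>
    if x then FreeGroup.of true * FreeGroup.of false
    else FreeGroup.of false * FreeGroup.of true

/-- Prepending a single letter that does not cancel with the head of the reduced word
just conses it onto the reduced word. -/
lemma cons_toWord {α : Type*} [DecidableEq α] (x : α) (e : Bool) (g : FreeGroup α)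
    (h : g.toWord.head? ≠ some (x, !e)) :
    (FreeGroup.mk [(x, e)] * g).toWord = (x, e) :: g.toWord := by
  conv_lhs => rw [← FreeGroup.mk_toWord (x := g)]
  rw [FreeGroup.mul_mk, FreeGroup.toWord_mk]
  have hred : FreeGroup.reduce g.toWord = g.toWord := FreeGroup.reduce_toWord g
  show FreeGroup.reduce ((x, e) :: g.toWord) = _
  rw [FreeGroup.reduce.cons, hred]
  cases hw : g.toWord with
  | nil => rfl
  | cons hd tl =>
    rw [hw] at h
    simp only [List.head?_cons] at h
    have : ¬((x, e).1 = hd.1 ∧ (x, e).2 = !hd.2) := by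
      rintro ⟨h1, h2⟩
      exact h (by cases hd; simp_all)
    simp [this]

/-- The endomorphism `θ` of `F(a,b)` with `θ(a) = ab`, `θ(b) = ba` is
injective. -/
theorem stmt_15 : Function.Injective θ := by
  show Function.Injective (FreeGroup.lift fun x : Bool =>
    if x then FreeGroup.of true * FreeGroup.of false
    else FreeGroup.of false * FreeGroup.of true)
  apply FreeGroup.injective_lift_of_ping_pong _
    (X := fun i : Bool => {g : FreeGroup Bool | g.toWord.head? = some (i, true)})
    (Y := fun i : Bool => {g : FreeGroup Bool | g.toWord.head? = some (!i, false)})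
  · intro i
    exact ⟨FreeGroup.of i, by simp [FreeGroup.toWord_of]⟩
  · intro i j hij
    rw [Function.onFun, Set.disjoint_left]
    rintro g h1 h2
    simp only [Set.mem_setOf_eq] at h1 h2
    rw [h1] at h2
    exact hij (by simpa using h2)
  · intro i j hij
    rw [Function.onFun, Set.disjoint_left]
    rintro g h1 h2
    simp only [Set.mem_setOf_eq] at h1 h2
    rw [h1] at h2
    simp only [Option.some.injEq, Prod.mk.injEq, Bool.not_inj_iff] at h2
    exact hij h2.1
  · intro i j
    rw [Set.disjoint_left]
    rintro g h1 h2
    simp only [Set.mem_setOf_eq] at h1 h2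
    rw [h1] at h2
    simp at h2
  · -- hX : a i • (Y i)ᶜ ⊆ X i
    intro i
    rintro _ ⟨g, hg, rfl⟩
    simp only [Set.mem_compl_iff, Set.mem_setOf_eq] at hg
    have key : FreeGroup.of i * FreeGroup.of (!i) * g =
        FreeGroup.mk [(i, true)] * (FreeGroup.mk [(!i, true)] * g) := by
      rw [mul_assoc]; rfl
    have h1 : (FreeGroup.mk [(!i, true)] * g).toWord = (!i, true) :: g.toWord :=
      cons_toWord _ _ _ (by simpa using hg)
    have h2 : (FreeGroup.mk [(i, true)] * (FreeGroup.mk [(!i, true)] * g)).toWord =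
        (i, true) :: (!i, true) :: g.toWord := by
      rw [cons_toWord _ _ _ (by rw [h1]; simp), h1]
    have : (if i then FreeGroup.of true * FreeGroup.of false
        else FreeGroup.of false * FreeGroup.of true) = FreeGroup.of i * FreeGroup.of (!i) := by
      cases i <;> simp
    show _ ∈ _
    simp only [smul_eq_mul, Set.mem_setOf_eq, this, key, h2, List.head?_cons]
  · -- hY : a⁻¹ i • (X i)ᶜ ⊆ Y i
    intro i
    rintro _ ⟨g, hg, rfl⟩
    simp only [Set.mem_compl_iff, Set.mem_setOf_eq] at hg
    have hinv : (if i then FreeGroup.of true * FreeGroup.of false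
        else FreeGroup.of false * FreeGroup.of true)⁻¹ =
        FreeGroup.mk [(!i, false)] * FreeGroup.mk [(i, false)] := by
      cases i <;> rfl
    have h1 : (FreeGroup.mk [(i, false)] * g).toWord = (i, false) :: g.toWord :=
      cons_toWord _ _ _ (by simpa using hg)
    have h2 : (FreeGroup.mk [(!i, false)] * (FreeGroup.mk [(i, false)] * g)).toWord =
        (!i, false) :: (i, false) :: g.toWord := by
      rw [cons_toWord _ _ _ (by rw [h1]; simp), h1]
    show _ ∈ _
    simp only [Pi.inv_apply, smul_eq_mul, Set.mem_setOf_eq, hinv, mul_assoc, h2, List.head?_cons]
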